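/- arXiv:2311.02770 — 5 statements merged into one kernel-verified Lean document; each statement's English description precedes it below -/
import Mathlib

section
/- Suppose a, b ∈ (π/2, π), a+b ∈ (π, 3π/2), a ≠ b, and cos(a)·sin(a)^3 = cos(b)·sin(b)^3. Then cos(a−b)·cos(2(a+b)) = cos(a+b) and 4π/3 < a+b < 3π/2. -/
open Real Set

theorem stmt_8 (a b : ℝ) (ha : a ∈ Ioo (π / 2) π) (hb : b ∈ Ioo (π / 2) π)
    (hab : a + b ∈ Ioo π (3 * π / 2)) (hne : a ≠ b)
    (heq : cos a * sin a ^ 3 = cos b * sin b ^ 3) :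
    cos (a - b) * cos (2 * (a + b)) = cos (a + b) ∧
      4 * π / 3 < a + b ∧ a + b < 3 * π / 2 := by
  obtain ⟨ha1, ha2⟩ := ha
  obtain ⟨hb1, hb2⟩ := hb
  obtain ⟨hab1, hab2⟩ := hab
  have hpi := Real.pi_pos
  -- sin (a - b) ≠ 0
  have hsne : sin (a - b) ≠ 0 := by
    intro h
    have h1 : -π < a - b := by linarith
    have h2 : a - b < π := by linarith
    have := (Real.sin_eq_zero_iff_of_lt_of_lt h1 h2).mp h
    exact hne (by linarith)
  -- key factorized identity
  have key : sin (a - b) * (cos (a + b) - cos (a - b) * cos (2 * (a + b))) = 0 := by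
    have h2 : (2:ℝ) * (a + b) = (a + b) + (a + b) := by ring
    rw [h2]
    simp only [Real.sin_sub, Real.cos_sub, Real.cos_add, Real.sin_add]
    linear_combination 2 * heq
      - (2*sin a*cos a + sin b*cos b - cos a^2*sin b*cos b^3 - 2*sin a*cos a*sin b^2*cos b^2
          - sin a*cos a*cos b^4 + sin a^2*sin b^3*cos b - sin a^2*sin b*cos b^3
          + cos a^2*sin b^3*cos b - sin a*cos a*sin b^4 + sin b^3*cos b - sin b*cos b^3)
        * (Real.sin_sq_add_cos_sq a)
      - (-(sin b*cos b) + 2*sin a*cos a^3*cos b^2 - 2*sin a*cos a + 2*sin a*cos a^3*sin b^2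
          - sin a*cos a*cos b^2 - sin a*cos a*sin b^2 + 2*sin a*cos a^3)
        * (Real.sin_sq_add_cos_sq b)
  have eq1 : cos (a - b) * cos (2 * (a + b)) = cos (a + b) := by
    rcases mul_eq_zero.mp key with h | h
    · exact absurd h hsne
    · linarith
  refine ⟨eq1, ?_, hab2⟩
  -- bounds
  have hc0 : 0 < cos (a - b) :=
    Real.cos_pos_of_mem_Ioo ⟨by linarith, by linarith⟩
  have hc1 : cos (a - b) < 1 := by
    have h1 := Real.sin_sq_add_cos_sq (a - b)
    have h2 : 0 < |sin (a - b)| := abs_pos.mpr hsne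
    nlinarith [sq_abs (sin (a - b))]
  have ht0 : cos (a + b) < 0 := by
    apply Real.cos_neg_of_pi_div_two_lt_of_lt <;> linarith
  have h2t : cos (2 * (a + b)) = 2 * cos (a + b) ^ 2 - 1 := Real.cos_two_mul (a + b)
  have heq2 : cos (a - b) * (2 * cos (a + b) ^ 2 - 1) = cos (a + b) := by
    rw [← h2t]; exact eq1
  have hneg : 2 * cos (a + b) ^ 2 - 1 < 0 := by
    by_contra h'
    push_neg at h'
    have := mul_nonneg hc0.le h'
    rw [heq2] at this
    linarith
  have hlt : 2 * cos (a + b) ^ 2 - 1 < cos (a + b) := by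
    nlinarith [mul_pos (by linarith : (0:ℝ) < 1 - cos (a - b))
      (by linarith : (0:ℝ) < 1 - 2 * cos (a + b) ^ 2)]
  have hthalf : -1/2 < cos (a + b) := by nlinarith [hlt, ht0]
  -- conclude a + b > 4π/3
  by_contra h
  push_neg at h
  have hsub : cos (2 * π - (a + b)) = cos (a + b) := by
    rw [show 2 * π - (a + b) = -(a+b) + 2*π by ring, Real.cos_add_two_pi, Real.cos_neg]
  have hle : cos (2 * π - (a + b)) ≤ cos (2 * π / 3) := by
    apply Real.cos_le_cos_of_nonneg_of_le_pi
    · positivity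
    · linarith
    · linarith
  have hval : cos (2 * π / 3) = -(1/2) := by
    rw [show 2 * π / 3 = π - π/3 by ring, Real.cos_pi_sub, Real.cos_pi_div_three]
  rw [hsub, hval] at hle
  linarith
end

section
/- Suppose a, b and a+b all lie in (0, π/2) with a ≠ b, and cos(a)·sin(a)^3 = cos(b)·sin(b)^3 and (1/2)·(cos(a)·sin(a)^3 + cos(b)·sin(b)^3) = cos(a+b)·sin(a+b)^3. Then a contradiction follows; i.e., no such a, b exist. -/
open Real Set

private lemma fHasDeriv (x : ℝ) :
    HasDerivAt (fun y => Real.cos y * Real.sin y ^ 3)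
      (Real.sin x ^ 2 * (4 * Real.cos x ^ 2 - 1)) x := by
  have h : HasDerivAt (fun y => Real.cos y * Real.sin y ^ 3)
      (-Real.sin x * Real.sin x ^ 3 + Real.cos x * (↑3 * Real.sin x ^ (3 - 1) * Real.cos x)) x :=
    (Real.hasDerivAt_cos x).mul ((Real.hasDerivAt_sin x).pow 3)
  convert h using 1
  have := Real.sin_sq_add_cos_sq x
  ring_nf
  nlinarith [this]

private lemma fMono : StrictMonoOn (fun y => Real.cos y * Real.sin y ^ 3)
    (Icc 0 (π / 3)) := by
  apply strictMonoOn_of_deriv_pos (convex_Icc _ _)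
  · exact (Real.continuous_cos.mul (Real.continuous_sin.pow 3)).continuousOn
  · intro x hx
    rw [interior_Icc] at hx
    rw [(fHasDeriv x).deriv]
    have hx0 : 0 < x := hx.1
    have hx3 : x < π / 3 := hx.2
    have hpi : 0 < π := Real.pi_pos
    have hs : 0 < Real.sin x := Real.sin_pos_of_pos_of_lt_pi hx0 (by linarith)
    have hc : Real.cos (π / 3) < Real.cos x := by
      apply Real.cos_lt_cos_of_nonneg_of_le_pi (le_of_lt hx0) (by linarith) hx3
    rw [Real.cos_pi_div_three] at hc
    have h1 : 0 < 4 * Real.cos x ^ 2 - 1 := by nlinarith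
    exact mul_pos (pow_pos hs 2) h1

private lemma fAnti : StrictAntiOn (fun y => Real.cos y * Real.sin y ^ 3)
    (Icc (π / 3) (π / 2)) := by
  apply strictAntiOn_of_deriv_neg (convex_Icc _ _)
  · exact (Real.continuous_cos.mul (Real.continuous_sin.pow 3)).continuousOn
  · intro x hx
    rw [interior_Icc] at hx
    rw [(fHasDeriv x).deriv]
    have hpi : 0 < π := Real.pi_pos
    have hx0 : π / 3 < x := hx.1
    have hx2 : x < π / 2 := hx.2
    have hs : 0 < Real.sin x := Real.sin_pos_of_pos_of_lt_pi (by linarith) (by linarith)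
    have hc : Real.cos x < Real.cos (π / 3) := by
      apply Real.cos_lt_cos_of_nonneg_of_le_pi (by positivity) (by linarith) hx0
    rw [Real.cos_pi_div_three] at hc
    have hc0 : 0 < Real.cos x := Real.cos_pos_of_mem_Ioo ⟨by linarith, hx2⟩
    have h1 : 4 * Real.cos x ^ 2 - 1 < 0 := by nlinarith
    exact mul_neg_of_pos_of_neg (pow_pos hs 2) h1

private lemma key (a b : ℝ) (ha : a ∈ Ioo 0 (π / 2)) (hb : b ∈ Ioo 0 (π / 2))
    (hab : a + b ∈ Ioo 0 (π / 2)) (hlt : a < b)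
    (heq1 : Real.cos a * Real.sin a ^ 3 = Real.cos b * Real.sin b ^ 3)
    (heq2 : (1 / 2) * (Real.cos a * Real.sin a ^ 3 + Real.cos b * Real.sin b ^ 3) =
      Real.cos (a + b) * Real.sin (a + b) ^ 3) : False := by
  obtain ⟨ha0, ha2⟩ := ha
  obtain ⟨hb0, hb2⟩ := hb
  obtain ⟨hab0, hab2⟩ := hab
  have hpi : 0 < π := Real.pi_pos
  -- a < π/3
  have haP : a < π / 3 := by
    by_contra h
    push_neg at h
    have := fAnti ⟨h, le_of_lt ha2⟩ ⟨le_trans h (le_of_lt hlt), le_of_lt hb2⟩ hlt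
    simp only at this
    linarith [this, heq1.ge, heq1.le]
  -- b > π/3
  have hbP : π / 3 < b := by
    by_contra h
    push_neg at h
    have := fMono ⟨le_of_lt ha0, le_of_lt (lt_of_lt_of_le hlt h)⟩ ⟨le_of_lt hb0, h⟩ hlt
    simp only at this
    linarith [this, heq1.ge, heq1.le]
  -- f(a+b) = f(b)
  have heq3 : Real.cos b * Real.sin b ^ 3 = Real.cos (a + b) * Real.sin (a + b) ^ 3 := by
    linarith
  have hlt2 : b < a + b := by linarith
  have := fAnti ⟨le_of_lt hbP, le_of_lt hb2⟩ ⟨by linarith, le_of_lt hab2⟩ hlt2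
  simp only at this
  linarith

theorem stmt_10 (a b : ℝ) (ha : a ∈ Ioo 0 (π / 2)) (hb : b ∈ Ioo 0 (π / 2))
    (hab : a + b ∈ Ioo 0 (π / 2)) (hne : a ≠ b)
    (heq1 : cos a * sin a ^ 3 = cos b * sin b ^ 3)
    (heq2 : (1 / 2) * (cos a * sin a ^ 3 + cos b * sin b ^ 3) =
      cos (a + b) * sin (a + b) ^ 3) :
    False := by
  rcases lt_or_gt_of_ne hne with h | h
  · exact key a b ha hb hab h heq1 heq2
  · have hab' : b + a ∈ Ioo 0 (π / 2) := by rwa [add_comm]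
    refine key b a hb ha hab' h heq1.symm ?_
    rw [add_comm b a]
    linarith
end

section
/- Suppose a, b ∈ (π/2, π) and a+b ∈ (π, 3π/2), and cos(a)·sin(a)^3 = cos(b)·sin(b)^3 and (1/2)·(cos(a)·sin(a)^3 + cos(b)·sin(b)^3) = −cos(a+b)·sin(a+b)^3. Then a = b = 2π/3. -/
open Real Set

noncomputable def hfun (x : ℝ) : ℝ := Real.cos x * Real.sin x ^ 3

lemma hfun_deriv (x : ℝ) :
    HasDerivAt hfun (Real.sin x ^ 2 * (4 * Real.cos x ^ 2 - 1)) x := by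
  have h1 : HasDerivAt hfun
      (-Real.sin x * Real.sin x ^ 3 +
        Real.cos x * (3 * Real.sin x ^ 2 * Real.cos x)) x := by
    have := (Real.hasDerivAt_cos x).mul ((Real.hasDerivAt_sin x).pow 3)
    exact this.congr_deriv (by simp only [Pi.pow_apply, Nat.cast_ofNat, Nat.reduceSub])
  convert h1 using 1
  linear_combination (Real.sin x ^ 2) * (Real.sin_sq_add_cos_sq x)

lemma hfun_mono : StrictMonoOn hfun (Icc 0 (π / 3)) := by
  apply strictMonoOn_of_deriv_pos (convex_Icc _ _)
  · exact (Real.continuous_cos.mul (Real.continuous_sin.pow 3)).continuousOn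
  · intro x hx
    rw [interior_Icc] at hx
    obtain ⟨hx1, hx2⟩ := hx
    rw [(hfun_deriv x).deriv]
    have hpi := Real.pi_pos
    have hsin : 0 < Real.sin x :=
      Real.sin_pos_of_pos_of_lt_pi hx1 (by linarith)
    have hcos : Real.cos (π / 3) < Real.cos x :=
      Real.cos_lt_cos_of_nonneg_of_le_pi hx1.le (by linarith) hx2
    rw [Real.cos_pi_div_three] at hcos
    have : 0 < 4 * Real.cos x ^ 2 - 1 := by nlinarith
    positivity

lemma hfun_anti : StrictAntiOn hfun (Icc (π / 3) (π / 2)) := by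
  apply strictAntiOn_of_deriv_neg (convex_Icc _ _)
  · exact (Real.continuous_cos.mul (Real.continuous_sin.pow 3)).continuousOn
  · intro x hx
    rw [interior_Icc] at hx
    obtain ⟨hx1, hx2⟩ := hx
    rw [(hfun_deriv x).deriv]
    have hpi := Real.pi_pos
    have hsin : 0 < Real.sin x :=
      Real.sin_pos_of_pos_of_lt_pi (by linarith) (by linarith)
    have hcos1 : Real.cos x < Real.cos (π / 3) :=
      Real.cos_lt_cos_of_nonneg_of_le_pi (by linarith) (by linarith) hx1
    rw [Real.cos_pi_div_three] at hcos1
    have hcos0 : 0 < Real.cos x :=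
      Real.cos_pos_of_mem_Ioo ⟨by linarith, hx2⟩
    have h1 : 4 * Real.cos x ^ 2 - 1 < 0 := by nlinarith
    have h2 : 0 < Real.sin x ^ 2 := by positivity
    exact mul_neg_of_pos_of_neg h2 h1

lemma key_s11 (x : ℝ) (hx0 : 0 < x) (hx2 : x < π / 2)
    (heq : hfun x = hfun (π - 2 * x)) : x = π / 3 := by
  have hpi := Real.pi_pos
  have hs : 0 < Real.sin x :=
    Real.sin_pos_of_pos_of_lt_pi hx0 (by linarith)
  have hc : 0 < Real.cos x :=
    Real.cos_pos_of_mem_Ioo ⟨by linarith, hx2⟩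
  unfold hfun at heq
  rw [Real.cos_pi_sub, Real.sin_pi_sub, Real.cos_two_mul, Real.sin_two_mul] at heq
  have h3 : Real.sin x ^ 3 * Real.cos x * (4 * Real.cos x ^ 2 - 1) ^ 2 = 0 := by
    linear_combination heq
  have hQ : (4 * Real.cos x ^ 2 - 1) ^ 2 = 0 := by
    nlinarith [mul_pos (pow_pos hs 3) hc, sq_nonneg (4 * Real.cos x ^ 2 - 1)]
  have h5 : 4 * Real.cos x ^ 2 - 1 = 0 := by
    have := pow_eq_zero_iff (n := 2) (by norm_num) |>.mp hQ
    exact this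
  have h4 : Real.cos x = 1 / 2 := by
    nlinarith [h5, hc, sq_nonneg (Real.cos x - 1 / 2), sq_nonneg (Real.cos x + 1 / 2)]
  have : Real.cos x = Real.cos (π / 3) := by rw [Real.cos_pi_div_three, h4]
  exact Real.injOn_cos ⟨hx0.le, by linarith⟩ ⟨by linarith, by linarith⟩ this

lemma aux (α β γ : ℝ) (hα : α ∈ Ioo 0 (π / 2)) (hβ : β ∈ Ioo 0 (π / 2))
    (hγ : γ ∈ Ioo 0 (π / 2)) (hsum : α + β + γ = π)
    (h1 : hfun α = hfun β) (h2 : hfun α = hfun γ) (hlt : α < β) : False := by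
  have hα3 : α < π / 3 := by
    by_contra hle
    push_neg at hle
    have := hfun_anti ⟨hle, hα.2.le⟩ ⟨le_trans hle hlt.le, hβ.2.le⟩ hlt
    rw [h1] at this
    exact lt_irrefl _ this
  have hβ3 : π / 3 < β := by
    by_contra hle
    push_neg at hle
    have := hfun_mono ⟨hα.1.le, by linarith⟩ ⟨hβ.1.le, hle⟩ hlt
    rw [h1] at this
    exact lt_irrefl _ this
  rcases le_or_gt γ (π / 3) with hγ3 | hγ3
  · have hγα : γ = α :=
      hfun_mono.injOn ⟨hγ.1.le, hγ3⟩ ⟨hα.1.le, hα3.le⟩ h2.symm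
    have hβeq : β = π - 2 * α := by
      rw [hγα] at hsum; linarith
    have : α = π / 3 := key_s11 α hα.1 hα.2 (by rw [← hβeq]; exact h1)
    linarith
  · have hγβ : γ = β :=
      hfun_anti.injOn ⟨hγ3.le, hγ.2.le⟩ ⟨hβ3.le, hβ.2.le⟩ (h1.symm.trans h2).symm
    have hαeq : α = π - 2 * β := by
      rw [hγβ] at hsum; linarith
    have : β = π / 3 := key_s11 β hβ.1 hβ.2 (by rw [← hαeq]; exact h1.symm)
    linarith

theorem stmt_11 (a b : ℝ) (ha : a ∈ Ioo (π / 2) π) (hb : b ∈ Ioo (π / 2) π)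
    (hab : a + b ∈ Ioo π (3 * π / 2))
    (heq1 : cos a * sin a ^ 3 = cos b * sin b ^ 3)
    (heq2 : (1 / 2) * (cos a * sin a ^ 3 + cos b * sin b ^ 3) =
      -(cos (a + b) * sin (a + b) ^ 3)) :
    a = 2 * π / 3 ∧ b = 2 * π / 3 := by
  have hpi := Real.pi_pos
  set α := π - a with hαdef
  set β := π - b with hβdef
  set γ := a + b - π with hγdef
  have hα : α ∈ Ioo 0 (π / 2) := ⟨by simp [hαdef]; linarith [ha.2], by simp [hαdef]; linarith [ha.1]⟩
  have hβ : β ∈ Ioo 0 (π / 2) := ⟨by simp [hβdef]; linarith [hb.2], by simp [hβdef]; linarith [hb.1]⟩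
  have hγ : γ ∈ Ioo 0 (π / 2) := ⟨by simp [hγdef]; linarith [hab.1], by simp [hγdef]; linarith [hab.2]⟩
  have hsum : α + β + γ = π := by simp [hαdef, hβdef, hγdef]; ring
  have ea : hfun α = -(cos a * sin a ^ 3) := by
    unfold hfun
    rw [hαdef, Real.cos_pi_sub, Real.sin_pi_sub]; ring
  have eb : hfun β = -(cos b * sin b ^ 3) := by
    unfold hfun
    rw [hβdef, Real.cos_pi_sub, Real.sin_pi_sub]; ring
  have ec : hfun γ = cos (a + b) * sin (a + b) ^ 3 := by
    unfold hfun
    rw [hγdef, Real.cos_sub_pi, Real.sin_sub_pi]; ring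
  have h1 : hfun α = hfun β := by rw [ea, eb, heq1]
  have h2 : hfun α = hfun γ := by rw [ea, ec]; linarith [heq1, heq2]
  rcases lt_trichotomy α β with hlt | heqab | hlt
  · exact absurd (aux α β γ hα hβ hγ hsum h1 h2 hlt) (by simp)
  · have hβeq : γ = π - 2 * α := by rw [← heqab] at hsum; linarith
    have hkey : α = π / 3 := key_s11 α hα.1 hα.2 (by rw [← hβeq]; exact h2)
    constructor
    · have : π - a = π / 3 := hkey
      linarith
    · have : π - b = π / 3 := by rw [← hβdef, ← heqab]; exact hkey
      linarith
  · exact absurd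
      (aux β α γ hβ hα hγ (by linarith) h1.symm (h1.symm.trans h2) hlt) (by simp)
end

section
/- There are no positive real numbers m1, m2, m3 satisfying both (22−12√2)·m1 − (10−√2)·(m2+m3) = 0 and (10−√2)·(m1+m3) − (22−12√2)·m2 = 0. (Indeed, the unique solution of this linear system has m1 = m2 = −(1+√2)·m3.) -/
open Real

theorem stmt_15 :
    ¬ ∃ m1 m2 m3 : ℝ, 0 < m1 ∧ 0 < m2 ∧ 0 < m3 ∧
      (22 - 12 * Real.sqrt 2) * m1 - (10 - Real.sqrt 2) * (m2 + m3) = 0 ∧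
      (10 - Real.sqrt 2) * (m1 + m3) - (22 - 12 * Real.sqrt 2) * m2 = 0 := by
  rintro ⟨m1, m2, m3, h1, h2, h3, e1, e2⟩
  have hs : Real.sqrt 2 ^ 2 = 2 := Real.sq_sqrt (by norm_num)
  have hl : (1.4 : ℝ) < Real.sqrt 2 := by
    nlinarith [Real.sqrt_nonneg 2, hs]
  have hu : Real.sqrt 2 < 1.5 := by
    nlinarith [Real.sqrt_nonneg 2, hs]
  have heq : m1 = m2 := by
    have : (32 - 13 * Real.sqrt 2) * (m1 - m2) = 0 := by ring_nf; nlinarith [e1, e2]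
    have hne : 32 - 13 * Real.sqrt 2 ≠ 0 := by nlinarith
    have := mul_eq_zero.mp this
    rcases this with h | h
    · exact absurd h hne
    · linarith
  subst heq
  nlinarith [e1, mul_pos h1 h3]
end

section
/- Let m1, m2, m3 > 0 and θ1, θ2, θ3 real with θ_i − θ_j not a multiple of π for i ≠ j. If m1·(cos(2θ1), sin(2θ1)) + m2·(cos(2θ2), sin(2θ2)) + m3·(cos(2θ3), sin(2θ3)) = (0,0) and θ2 − θ3 = θ3 − θ1, then m1 = m2. -/
open Real

theorem stmt_18 (m1 m2 m3 θ1 θ2 θ3 : ℝ)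
    (h1 : 0 < m1) (h2 : 0 < m2) (h3 : 0 < m3)
    (hd12 : ∀ k : ℤ, θ1 - θ2 ≠ k * π)
    (hd23 : ∀ k : ℤ, θ2 - θ3 ≠ k * π)
    (hd31 : ∀ k : ℤ, θ3 - θ1 ≠ k * π)
    (hcos : m1 * cos (2 * θ1) + m2 * cos (2 * θ2) + m3 * cos (2 * θ3) = 0)
    (hsin : m1 * sin (2 * θ1) + m2 * sin (2 * θ2) + m3 * sin (2 * θ3) = 0)
    (hiso : θ2 - θ3 = θ3 - θ1) :
    m1 = m2 := by
  have e1 : m1 * sin (2*θ1 - 2*θ3) + m2 * sin (2*θ2 - 2*θ3) = 0 := by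
    rw [sin_sub, sin_sub]
    linear_combination cos (2*θ3) * hsin - sin (2*θ3) * hcos
  have e2 : 2*θ2 - 2*θ3 = -(2*θ1 - 2*θ3) := by linarith
  rw [e2, sin_neg] at e1
  have key : (m1 - m2) * sin (2*θ1 - 2*θ3) = 0 := by linarith
  have hne : sin (2*θ1 - 2*θ3) ≠ 0 := by
    intro h
    rw [Real.sin_eq_zero_iff] at h
    obtain ⟨n, hn⟩ := h
    exact hd12 n (by linarith)
  have := mul_eq_zero.mp key
  rcases this with h | h
  · linarith
  · exact absurd h hne
end
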